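/- arXiv:1504.01086 — 2 statements merged into one kernel-verified Lean document; each statement's English description precedes it below -/
import Mathlib

section
/- In the virtual singular braid monoid VSB_n, for every 1 ≤ i ≤ n−2 one has the detour formula τ_{i+1} = (v_i v_{i−1} ⋯ v₂ v₁)(v_{i+1} v_i ⋯ v₃ v₂) τ_1 (v₂ v₃ ⋯ v_i v_{i+1})(v₁ v₂ ⋯ v_{i−1} v_i). -/
namespace VSBpaper

/-- `ascV v a b = v a * v (a+1) * ⋯ * v b` (equal to `1` when `b < a`). -/
def ascV {M : Type*} [Monoid M] (v : ℕ → M) (a b : ℕ) : M :=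
  ((List.range' a (b + 1 - a)).map v).prod

/-- `descV v a b = v b * v (b-1) * ⋯ * v a` (equal to `1` when `b < a`). -/
def descV {M : Type*} [Monoid M] (v : ℕ → M) (a b : ℕ) : M :=
  (((List.range' a (b + 1 - a)).map v).reverse).prod

/-- Generators of the virtual singular braid monoid on `n` strands:
`sig a` is `σ_{a+1}`, `sigInv a` is `σ_{a+1}⁻¹`, `tau a` is `τ_{a+1}`, `vir a` is `v_{a+1}`,
so that generator indices automatically lie in `{1, …, n-1}`. -/
inductive VSBgen (n : ℕ) : Type
  | sig : Fin (n - 1) → VSBgen n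
  | sigInv : Fin (n - 1) → VSBgen n
  | tau : Fin (n - 1) → VSBgen n
  | vir : Fin (n - 1) → VSBgen n

open FreeMonoid VSBgen in
/-- The defining relations of the virtual singular braid monoid `VSB n`. -/
inductive VSBrel (n : ℕ) : FreeMonoid (VSBgen n) → FreeMonoid (VSBgen n) → Prop
  /- σᵢ σᵢ⁻¹ = 1 -/
  | mul_inv (a : Fin (n - 1)) :
      VSBrel n (of (sig a) * of (sigInv a)) 1
  /- σᵢ⁻¹ σᵢ = 1 -/
  | inv_mul (a : Fin (n - 1)) :
      VSBrel n (of (sigInv a) * of (sig a)) 1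
  /- vᵢ² = 1 -/
  | v_sq (a : Fin (n - 1)) :
      VSBrel n (of (vir a) * of (vir a)) 1
  /- σᵢσⱼσᵢ = σⱼσᵢσⱼ for |i-j| = 1 -/
  | braid_sig (a b : Fin (n - 1)) (h : (a : ℕ) + 1 = b ∨ (b : ℕ) + 1 = a) :
      VSBrel n (of (sig a) * of (sig b) * of (sig a))
               (of (sig b) * of (sig a) * of (sig b))
  /- vᵢvⱼvᵢ = vⱼvᵢvⱼ for |i-j| = 1 -/
  | braid_vir (a b : Fin (n - 1)) (h : (a : ℕ) + 1 = b ∨ (b : ℕ) + 1 = a) :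
      VSBrel n (of (vir a) * of (vir b) * of (vir a))
               (of (vir b) * of (vir a) * of (vir b))
  /- vᵢσⱼvᵢ = vⱼσᵢvⱼ for |i-j| = 1 -/
  | vir_sig_vir (a b : Fin (n - 1)) (h : (a : ℕ) + 1 = b ∨ (b : ℕ) + 1 = a) :
      VSBrel n (of (vir a) * of (sig b) * of (vir a))
               (of (vir b) * of (sig a) * of (vir b))
  /- vᵢτⱼvᵢ = vⱼτᵢvⱼ for |i-j| = 1 -/
  | vir_tau_vir (a b : Fin (n - 1)) (h : (a : ℕ) + 1 = b ∨ (b : ℕ) + 1 = a) :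
      VSBrel n (of (vir a) * of (tau b) * of (vir a))
               (of (vir b) * of (tau a) * of (vir b))
  /- σᵢσⱼτᵢ = τⱼσᵢσⱼ for |i-j| = 1 -/
  | sig_sig_tau (a b : Fin (n - 1)) (h : (a : ℕ) + 1 = b ∨ (b : ℕ) + 1 = a) :
      VSBrel n (of (sig a) * of (sig b) * of (tau a))
               (of (tau b) * of (sig a) * of (sig b))
  /- σᵢτᵢ = τᵢσᵢ -/
  | sig_tau (a : Fin (n - 1)) :
      VSBrel n (of (sig a) * of (tau a)) (of (tau a) * of (sig a))
  /- gᵢ hⱼ = hⱼ gᵢ for g, h ∈ {σ, σ⁻¹, τ, v} and |i-j| > 1 -/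
  | far_comm (g h : Fin (n - 1) → VSBgen n)
      (hg : g = sig ∨ g = sigInv ∨ g = tau ∨ g = vir)
      (hh : h = sig ∨ h = sigInv ∨ h = tau ∨ h = vir)
      (a b : Fin (n - 1)) (hab : (a : ℕ) + 1 < b ∨ (b : ℕ) + 1 < a) :
      VSBrel n (of (g a) * of (h b)) (of (h b) * of (g a))

/-- The virtual singular braid monoid on `n` strands, presented by generators and relations. -/
abbrev VSB (n : ℕ) := PresentedMonoid (VSBrel n)

/-- The real crossing `σ_k ∈ VSB n` (junk value `1` if `k ∉ {1, …, n-1}`). -/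
def VSB.sigE (n : ℕ) (k : ℕ) : VSB n :=
  if h : 1 ≤ k ∧ k ≤ n - 1 then PresentedMonoid.of (VSBrel n) (VSBgen.sig ⟨k - 1, by omega⟩)
  else 1

/-- The inverse real crossing `σ_k⁻¹ ∈ VSB n` (junk value `1` if `k ∉ {1, …, n-1}`). -/
def VSB.sigInvE (n : ℕ) (k : ℕ) : VSB n :=
  if h : 1 ≤ k ∧ k ≤ n - 1 then PresentedMonoid.of (VSBrel n) (VSBgen.sigInv ⟨k - 1, by omega⟩)
  else 1

/-- The singular crossing `τ_k ∈ VSB n` (junk value `1` if `k ∉ {1, …, n-1}`). -/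
def VSB.tauE (n : ℕ) (k : ℕ) : VSB n :=
  if h : 1 ≤ k ∧ k ≤ n - 1 then PresentedMonoid.of (VSBrel n) (VSBgen.tau ⟨k - 1, by omega⟩)
  else 1

/-- The virtual crossing `v_k ∈ VSB n` (junk value `1` if `k ∉ {1, …, n-1}`). -/
def VSB.virE (n : ℕ) (k : ℕ) : VSB n :=
  if h : 1 ≤ k ∧ k ≤ n - 1 then PresentedMonoid.of (VSBrel n) (VSBgen.vir ⟨k - 1, by omega⟩)
  else 1

section Aux

variable {n : ℕ}

lemma mk_rel {a b : FreeMonoid (VSBgen n)} (h : VSBrel n a b) :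
    PresentedMonoid.mk (VSBrel n) a = PresentedMonoid.mk (VSBrel n) b :=
  Quotient.sound (ConGen.Rel.of _ _ h)

lemma virE_eq (k : ℕ) (h1 : 1 ≤ k) (h2 : k ≤ n - 1) :
    VSB.virE n k = PresentedMonoid.of (VSBrel n) (VSBgen.vir ⟨k - 1, by omega⟩) := by
  simp [VSB.virE, h1, h2]

lemma tauE_eq (k : ℕ) (h1 : 1 ≤ k) (h2 : k ≤ n - 1) :
    VSB.tauE n k = PresentedMonoid.of (VSBrel n) (VSBgen.tau ⟨k - 1, by omega⟩) := by
  simp [VSB.tauE, h1, h2]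

lemma virE_sq (k : ℕ) (h1 : 1 ≤ k) (h2 : k ≤ n - 1) :
    VSB.virE n k * VSB.virE n k = 1 := by
  rw [virE_eq k h1 h2]
  exact mk_rel (VSBrel.v_sq ⟨k - 1, by omega⟩)

lemma vtv (k : ℕ) (h1 : 1 ≤ k) (h2 : k + 1 ≤ n - 1) :
    VSB.virE n k * VSB.tauE n (k + 1) * VSB.virE n k =
      VSB.virE n (k + 1) * VSB.tauE n k * VSB.virE n (k + 1) := by
  rw [virE_eq k h1 (by omega), virE_eq (k + 1) (by omega) h2,
    tauE_eq k h1 (by omega), tauE_eq (k + 1) (by omega) h2]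
  have := mk_rel (VSBrel.vir_tau_vir (n := n) ⟨k - 1, by omega⟩ ⟨k, by omega⟩
    (Or.inl (by simp; omega)))
  simpa [PresentedMonoid.of, map_mul] using this

lemma tau_step (k : ℕ) (h1 : 1 ≤ k) (h2 : k + 1 ≤ n - 1) :
    VSB.tauE n (k + 1) =
      VSB.virE n k * VSB.virE n (k + 1) * VSB.tauE n k * VSB.virE n (k + 1) * VSB.virE n k := by
  have hs := virE_sq (n := n) k h1 (by omega)
  calc VSB.tauE n (k + 1)
      = VSB.virE n k * (VSB.virE n k * VSB.tauE n (k + 1) * VSB.virE n k) * VSB.virE n k := by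
        have : VSB.virE n k * (VSB.virE n k * VSB.tauE n (k + 1) * VSB.virE n k) *
            VSB.virE n k =
            (VSB.virE n k * VSB.virE n k) * VSB.tauE n (k + 1) *
              (VSB.virE n k * VSB.virE n k) := by
          simp only [mul_assoc]
        rw [this, hs, one_mul, mul_one]
    _ = VSB.virE n k * (VSB.virE n (k + 1) * VSB.tauE n k * VSB.virE n (k + 1)) * VSB.virE n k := by
        rw [vtv k h1 h2]
    _ = _ := by rw [← mul_assoc, ← mul_assoc]

lemma vv_comm (j k : ℕ) (h1 : 1 ≤ j) (h2 : j + 1 < k) (h3 : k ≤ n - 1) :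
    VSB.virE n j * VSB.virE n k = VSB.virE n k * VSB.virE n j := by
  rw [virE_eq j h1 (by omega), virE_eq k (by omega) h3]
  have := mk_rel (VSBrel.far_comm (n := n) VSBgen.vir VSBgen.vir
    (by tauto) (by tauto) ⟨j - 1, by omega⟩ ⟨k - 1, by omega⟩ (Or.inl (by simp; omega)))
  simpa [PresentedMonoid.of, map_mul] using this

lemma descV_zero {M : Type*} [Monoid M] (v : ℕ → M) : descV v 1 0 = 1 := by
  simp [descV]

lemma ascV_zero {M : Type*} [Monoid M] (v : ℕ → M) : ascV v 1 0 = 1 := by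
  simp [ascV]

lemma descV_succ {M : Type*} [Monoid M] (v : ℕ → M) (a b : ℕ) (h : a ≤ b + 1) :
    descV v a (b + 1) = v (b + 1) * descV v a b := by
  unfold descV
  rw [show b + 1 + 1 - a = (b + 1 - a) + 1 by omega, List.range'_1_concat,
    show a + (b + 1 - a) = b + 1 by omega]
  simp

lemma ascV_succ {M : Type*} [Monoid M] (v : ℕ → M) (a b : ℕ) (h : a ≤ b + 1) :
    ascV v a (b + 1) = ascV v a b * v (b + 1) := by
  unfold ascV
  rw [show b + 1 + 1 - a = (b + 1 - a) + 1 by omega, List.range'_1_concat,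
    show a + (b + 1 - a) = b + 1 by omega]
  simp

lemma descV_comm (m k : ℕ) (h2 : m + 1 < k) (h3 : k ≤ n - 1) :
    descV (VSB.virE n) 1 m * VSB.virE n k = VSB.virE n k * descV (VSB.virE n) 1 m := by
  induction m with
  | zero => simp [descV_zero]
  | succ m ih =>
    rw [descV_succ _ _ _ (by omega), mul_assoc, ih (by omega), ← mul_assoc,
      vv_comm (m + 1) k (by omega) (by omega) h3, mul_assoc]

lemma ascV_comm (m k : ℕ) (h2 : m + 1 < k) (h3 : k ≤ n - 1) :
    ascV (VSB.virE n) 1 m * VSB.virE n k = VSB.virE n k * ascV (VSB.virE n) 1 m := by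
  induction m with
  | zero => simp [ascV_zero]
  | succ m ih =>
    rw [ascV_succ _ _ _ (by omega), mul_assoc,
      vv_comm (m + 1) k (by omega) (by omega) h3, ← mul_assoc, ih (by omega), mul_assoc]

end Aux

/-- **Detour formula for the singular crossings in `VSB n`.**
For every `1 ≤ i ≤ n-2`,
`τ_{i+1} = (v_i ⋯ v₂v₁)(v_{i+1} ⋯ v₃v₂) τ₁ (v₂v₃ ⋯ v_{i+1})(v₁v₂ ⋯ v_i)`. -/
theorem VSB_detour_tau (n : ℕ) (hn : 2 ≤ n) :
    ∀ i : ℕ, 1 ≤ i → i ≤ n - 2 →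
      VSB.tauE n (i + 1) =
        descV (VSB.virE n) 1 i * descV (VSB.virE n) 2 (i + 1) * VSB.tauE n 1 *
          ascV (VSB.virE n) 2 (i + 1) * ascV (VSB.virE n) 1 i := by
  intro i hi
  induction i, hi using Nat.le_induction with
  | base =>
    intro h
    have h1 : descV (VSB.virE n) 1 1 = VSB.virE n 1 := by
      rw [show (1 : ℕ) = 0 + 1 from rfl, descV_succ _ _ _ (by omega), descV_zero, mul_one]
    have h2 : descV (VSB.virE n) 2 2 = VSB.virE n 2 := by simp [descV]
    have h3 : ascV (VSB.virE n) 2 2 = VSB.virE n 2 := by simp [ascV]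
    have h4 : ascV (VSB.virE n) 1 1 = VSB.virE n 1 := by
      rw [show (1 : ℕ) = 0 + 1 from rfl, ascV_succ _ _ _ (by omega), ascV_zero, one_mul]
    rw [h1, h2, h3, h4]
    exact tau_step 1 le_rfl (by omega)
  | succ i hi ih =>
    intro h
    have hbd : i + 2 ≤ n - 1 := by omega
    rw [tau_step (i + 1) (by omega) hbd, ih (by omega)]
    rw [descV_succ _ 1 i (by omega), descV_succ _ 2 (i + 1) (by omega),
      ascV_succ _ 1 i (by omega), ascV_succ _ 2 (i + 1) (by omega)]
    have c1 : descV (VSB.virE n) 1 i * VSB.virE n (i + 2) =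
        VSB.virE n (i + 2) * descV (VSB.virE n) 1 i := descV_comm i (i + 2) (by omega) hbd
    have c2 : ascV (VSB.virE n) 1 i * VSB.virE n (i + 2) =
        VSB.virE n (i + 2) * ascV (VSB.virE n) 1 i := ascV_comm i (i + 2) (by omega) hbd
    calc VSB.virE n (i+1) * VSB.virE n (i+2) *
          (descV (VSB.virE n) 1 i * descV (VSB.virE n) 2 (i+1) * VSB.tauE n 1 *
            ascV (VSB.virE n) 2 (i+1) * ascV (VSB.virE n) 1 i) *
          VSB.virE n (i+2) * VSB.virE n (i+1)
        = VSB.virE n (i+1) * (VSB.virE n (i+2) * descV (VSB.virE n) 1 i) *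
            descV (VSB.virE n) 2 (i+1) * VSB.tauE n 1 *
            ascV (VSB.virE n) 2 (i+1) * (ascV (VSB.virE n) 1 i * VSB.virE n (i+2)) *
            VSB.virE n (i+1) := by
          simp only [mul_assoc]
      _ = VSB.virE n (i+1) * (descV (VSB.virE n) 1 i * VSB.virE n (i+2)) *
            descV (VSB.virE n) 2 (i+1) * VSB.tauE n 1 *
            ascV (VSB.virE n) 2 (i+1) * (VSB.virE n (i+2) * ascV (VSB.virE n) 1 i) *
            VSB.virE n (i+1) := by rw [c1, c2]
      _ = VSB.virE n (i+1) * descV (VSB.virE n) 1 i *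
            (VSB.virE n (i+2) * descV (VSB.virE n) 2 (i+1)) * VSB.tauE n 1 *
            (ascV (VSB.virE n) 2 (i+1) * VSB.virE n (i+2)) *
            (ascV (VSB.virE n) 1 i * VSB.virE n (i+1)) := by
          simp only [mul_assoc]

end VSBpaper
end

section
/- Under the stated hypotheses, for all indices 1 ≤ i, j ≤ n−1 with |i−j| = 1, the braid relation σ_i σ_j σ_i = σ_j σ_i σ_j holds in M. -/
namespace VSBpaper

section Helpers

variable {M : Type*} [Monoid M] (v : ℕ → M)

lemma ascV_of_lt {a b : ℕ} (h : b < a) : ascV v a b = 1 := by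
  simp [ascV, Nat.sub_eq_zero_of_le h]

lemma descV_of_lt {a b : ℕ} (h : b < a) : descV v a b = 1 := by
  simp [descV, Nat.sub_eq_zero_of_le h]

lemma ascV_concat {a b : ℕ} (h : a ≤ b + 1) : ascV v a (b + 1) = ascV v a b * v (b + 1) := by
  have h1 : b + 1 + 1 - a = (b + 1 - a) + 1 := by omega
  have h2 : a + 1 * (b + 1 - a) = b + 1 := by omega
  rw [ascV, h1, List.range'_concat, h2]
  simp [ascV]

lemma descV_cons {a b : ℕ} (h : a ≤ b + 1) : descV v a (b + 1) = v (b + 1) * descV v a b := by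
  have h1 : b + 1 + 1 - a = (b + 1 - a) + 1 := by omega
  have h2 : a + 1 * (b + 1 - a) = b + 1 := by omega
  rw [descV, h1, List.range'_concat, h2]
  simp [descV]

lemma ascV_self (a : ℕ) : ascV v a a = v a := by
  have : a + 1 - a = 1 := by omega
  simp [ascV, this]

lemma descV_self (a : ℕ) : descV v a a = v a := by
  have : a + 1 - a = 1 := by omega
  simp [descV, this]

lemma commute_ascV {x : M} {a b : ℕ} (h : ∀ j, a ≤ j → j ≤ b → x * v j = v j * x) :
    x * ascV v a b = ascV v a b * x := by
  refine (Commute.list_prod_right _ _ ?_).eq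
  intro y hy
  rcases List.mem_map.mp hy with ⟨j, hj, rfl⟩
  rcases List.mem_range'_1.mp hj with ⟨h1, h2⟩
  exact h j h1 (by omega)

lemma commute_descV {x : M} {a b : ℕ} (h : ∀ j, a ≤ j → j ≤ b → x * v j = v j * x) :
    x * descV v a b = descV v a b * x := by
  refine (Commute.list_prod_right _ _ ?_).eq
  intro y hy
  rw [List.mem_reverse] at hy
  rcases List.mem_map.mp hy with ⟨j, hj, rfl⟩
  rcases List.mem_range'_1.mp hj with ⟨h1, h2⟩
  exact h j h1 (by omega)

lemma descV_mul_ascV {a b : ℕ} (h : ∀ k, a ≤ k → k ≤ b → v k * v k = 1) :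
    descV v a b * ascV v a b = 1 := by
  induction b with
  | zero =>
    rcases Nat.eq_zero_or_pos a with rfl | ha
    · rw [ascV_self, descV_self]; exact h 0 le_rfl le_rfl
    · rw [ascV_of_lt v ha, descV_of_lt v ha, one_mul]
  | succ b ih =>
    rcases le_or_gt a (b+1) with hab | hab
    · rw [ascV_concat v hab, descV_cons v hab]
      have hD : descV v a b * ascV v a b = 1 := ih (fun k hk hk' => h k hk (by omega))
      calc v (b+1) * descV v a b * (ascV v a b * v (b+1))
          = v (b+1) * (descV v a b * ascV v a b) * v (b+1) := by
            simp [mul_assoc]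
        _ = 1 := by rw [hD, mul_one, h (b+1) hab le_rfl]
    · rw [ascV_of_lt v hab, descV_of_lt v hab, one_mul]

lemma ascV_mul_descV {a b : ℕ} (h : ∀ k, a ≤ k → k ≤ b → v k * v k = 1) :
    ascV v a b * descV v a b = 1 := by
  induction b with
  | zero =>
    rcases Nat.eq_zero_or_pos a with rfl | ha
    · rw [ascV_self, descV_self]; exact h 0 le_rfl le_rfl
    · rw [ascV_of_lt v ha, descV_of_lt v ha, one_mul]
  | succ b ih =>
    rcases le_or_gt a (b+1) with hab | hab
    · rw [ascV_concat v hab, descV_cons v hab]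
      have hD : ascV v a b * descV v a b = 1 := ih (fun k hk hk' => h k hk (by omega))
      calc ascV v a b * v (b+1) * (v (b+1) * descV v a b)
          = ascV v a b * (v (b+1) * v (b+1)) * descV v a b := by
            simp [mul_assoc]
        _ = 1 := by rw [h (b+1) hab le_rfl, mul_one, hD]
    · rw [ascV_of_lt v hab, descV_of_lt v hab, one_mul]

end Helpers

section MulHelpers

variable {M : Type*} [Monoid M]

lemma swap_head {a b : M} (h : a * b = b * a) (x : M) : a * (b * x) = b * (a * x) := by
  rw [← mul_assoc, h, mul_assoc]

lemma braid_tail {a b : M} (h : a * b * a = b * a * b) (x : M) :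
    a * (b * (a * x)) = b * (a * (b * x)) := by
  rw [← mul_assoc, ← mul_assoc, h, mul_assoc, mul_assoc]

lemma cancel_head {a : M} (h : a * a = 1) (x : M) : a * (a * x) = x := by
  rw [← mul_assoc, h, one_mul]

lemma fuse {a b c : M} (h : a * b = c) (x : M) : a * (b * x) = c * x := by
  rw [← mul_assoc, h]

/-- abc-identity: with `a,b,c` consecutive involutive braid letters,
    `a b c a b c = b c a b`, in tail form. -/
lemma abc_tail {a b c : M} (hab : a * b * a = b * a * b) (hbc : b * c * b = c * b * c)
    (hac : a * c = c * a) (hc : c * c = 1) (y : M) :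
    a * (b * (c * (a * (b * (c * y))))) = b * (c * (a * (b * y))) := by
  rw [swap_head hac.symm, braid_tail hab, braid_tail hbc, cancel_head hc, swap_head hac]

lemma abc'_tail {a b c : M} (hab : a * b * a = b * a * b) (hbc : b * c * b = c * b * c)
    (hac : a * c = c * a) (hb : b * b = 1) (y : M) :
    c * (b * (a * (c * (b * (a * y))))) = b * (a * (c * (b * y))) := by
  rw [swap_head hac, braid_tail hab, braid_tail hbc.symm, cancel_head hb, swap_head hac.symm]

end MulHelpers

end VSBpaper

namespace VSBpaper

section WordLemmas

variable {M : Type*} [Monoid M] {n : ℕ} {v : ℕ → M}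

/-- `Aw v m` is the conjugating word `(v_m ⋯ v_1)(v_{m+1} ⋯ v_2)`. -/
def Aw (v : ℕ → M) (m : ℕ) : M := descV v 1 m * descV v 2 (m+1)

/-- `Aw' v m` is the reversed word `(v_2 ⋯ v_{m+1})(v_1 ⋯ v_m)`. -/
def Aw' (v : ℕ → M) (m : ℕ) : M := ascV v 2 (m+1) * ascV v 1 m

/-- `zw v i = v_2 ⋯ v_i v_{i+1} v_i ⋯ v_2` (a palindrome word). -/
def zw (v : ℕ → M) (i : ℕ) : M := ascV v 2 i * descV v 2 (i+1)

lemma Aw_zero : Aw v 0 = 1 := by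
  rw [Aw, descV_of_lt v (by norm_num), descV_of_lt v (by norm_num), one_mul]

lemma Aw'_zero : Aw' v 0 = 1 := by
  rw [Aw', ascV_of_lt v (by norm_num), ascV_of_lt v (by norm_num), one_mul]

lemma zw_one : zw v 1 = v 2 := by
  rw [zw, ascV_of_lt v (by norm_num), descV_self, one_mul]

variable (hvbraid : ∀ i j : ℕ, 1 ≤ i → i ≤ n - 1 → 1 ≤ j → j ≤ n - 1 → (i + 1 = j ∨ j + 1 = i) →
      v i * v j * v i = v j * v i * v j)
    (hvcomm : ∀ i j : ℕ, 1 ≤ i → i ≤ n - 1 → 1 ≤ j → j ≤ n - 1 → (i + 1 < j ∨ j + 1 < i) →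
      v i * v j = v j * v i)
    (hvsq : ∀ i : ℕ, 1 ≤ i → i ≤ n - 1 → v i * v i = 1)

include hvcomm in
lemma Arec (m : ℕ) (h : m + 2 ≤ n - 1) :
    Aw v (m+1) = v (m+1) * (v (m+2) * Aw v m) := by
  have hc : v (m+2) * descV v 1 m = descV v 1 m * v (m+2) :=
    commute_descV v (fun j hj1 hj2 =>
      hvcomm (m+2) j (by omega) (by omega) hj1 (by omega) (Or.inr (by omega)))
  rw [Aw, Aw, descV_cons v (show (1:ℕ) ≤ m + 1 by omega),
    descV_cons v (show (2:ℕ) ≤ m + 2 by omega)]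
  simp only [mul_assoc]
  rw [swap_head hc.symm]

include hvcomm in
lemma A'rec (m : ℕ) (h : m + 2 ≤ n - 1) :
    Aw' v (m+1) = Aw' v m * (v (m+2) * v (m+1)) := by
  have hc : v (m+2) * ascV v 1 m = ascV v 1 m * v (m+2) :=
    commute_ascV v (fun j hj1 hj2 =>
      hvcomm (m+2) j (by omega) (by omega) hj1 (by omega) (Or.inr (by omega)))
  rw [Aw', Aw', ascV_concat v (show (1:ℕ) ≤ m + 1 by omega),
    ascV_concat v (show (2:ℕ) ≤ m + 2 by omega)]
  simp only [mul_assoc]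
  rw [fuse hc, ← mul_assoc, ← mul_assoc]
  simp only [mul_assoc]

include hvbraid hvcomm in
lemma Zrec (m : ℕ) (h1 : 1 ≤ m) (h : m + 2 ≤ n - 1) :
    zw v (m+1) = v (m+2) * (zw v m * v (m+2)) := by
  have hca : v (m+2) * ascV v 2 m = ascV v 2 m * v (m+2) :=
    commute_ascV v (fun j hj1 hj2 =>
      hvcomm (m+2) j (by omega) (by omega) (by omega) (by omega) (Or.inr (by omega)))
  have hcd : v (m+2) * descV v 2 m = descV v 2 m * v (m+2) :=
    commute_descV v (fun j hj1 hj2 =>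
      hvcomm (m+2) j (by omega) (by omega) (by omega) (by omega) (Or.inr (by omega)))
  have hbr : v (m+2) * v (m+1) * v (m+2) = v (m+1) * v (m+2) * v (m+1) :=
    hvbraid (m+2) (m+1) (by omega) (by omega) (by omega) (by omega) (Or.inr rfl)
  rw [zw, zw, ascV_concat v (show (2:ℕ) ≤ m + 1 by omega),
    descV_cons v (show (2:ℕ) ≤ m + 2 by omega), descV_cons v (show (2:ℕ) ≤ m + 1 by omega)]
  simp only [mul_assoc]
  rw [show m + 1 + 1 = m + 2 from rfl, ← hcd, swap_head hca, braid_tail hbr]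

end WordLemmas

end VSBpaper

namespace VSBpaper

section MainLemmas

variable {M : Type*} [Monoid M] {n : ℕ} {v : ℕ → M}
variable (hvbraid : ∀ i j : ℕ, 1 ≤ i → i ≤ n - 1 → 1 ≤ j → j ≤ n - 1 → (i + 1 = j ∨ j + 1 = i) →
      v i * v j * v i = v j * v i * v j)
    (hvcomm : ∀ i j : ℕ, 1 ≤ i → i ≤ n - 1 → 1 ≤ j → j ≤ n - 1 → (i + 1 < j ∨ j + 1 < i) →
      v i * v j = v j * v i)
    (hvsq : ∀ i : ℕ, 1 ≤ i → i ≤ n - 1 → v i * v i = 1)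

include hvbraid hvcomm hvsq in
lemma Nlem : ∀ m : ℕ, m + 2 ≤ n - 1 → ∀ x : M,
    Aw v m * (v 1 * (zw v (m+1) * x)) = v (m+1) * (v (m+2) * (Aw v m * x)) := by
  intro m
  induction m with
  | zero => intro h x; simp [Aw_zero, zw_one]
  | succ k ih =>
    intro h x
    have ihx := ih (by omega)
    have hz : zw v (k+2) = v (k+3) * (zw v (k+1) * v (k+3)) :=
      Zrec hvbraid hvcomm (k+1) (by omega) (by omega)
    have h13 : v 1 * v (k+3) = v (k+3) * v 1 :=
      hvcomm 1 (k+3) (by omega) (by omega) (by omega) (by omega) (Or.inl (by omega))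
    have hA3 : v (k+3) * Aw v k = Aw v k * v (k+3) := by
      have h1 : v (k+3) * descV v 1 k = descV v 1 k * v (k+3) :=
        commute_descV v (fun j hj1 hj2 =>
          hvcomm (k+3) j (by omega) (by omega) hj1 (by omega) (Or.inr (by omega)))
      have h2 : v (k+3) * descV v 2 (k+1) = descV v 2 (k+1) * v (k+3) :=
        commute_descV v (fun j hj1 hj2 =>
          hvcomm (k+3) j (by omega) (by omega) (by omega) (by omega) (Or.inr (by omega)))
      rw [Aw, ← mul_assoc, h1, mul_assoc, h2, ← mul_assoc]
    have hbr12 : v (k+1) * v (k+2) * v (k+1) = v (k+2) * v (k+1) * v (k+2) :=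
      hvbraid (k+1) (k+2) (by omega) (by omega) (by omega) (by omega) (Or.inl rfl)
    have hbr23 : v (k+2) * v (k+3) * v (k+2) = v (k+3) * v (k+2) * v (k+3) :=
      hvbraid (k+2) (k+3) (by omega) (by omega) (by omega) (by omega) (Or.inl rfl)
    have hc13 : v (k+1) * v (k+3) = v (k+3) * v (k+1) :=
      hvcomm (k+1) (k+3) (by omega) (by omega) (by omega) (by omega) (Or.inl (by omega))
    have hsq3 : v (k+3) * v (k+3) = 1 := hvsq (k+3) (by omega) (by omega)
    show Aw v (k+1) * (v 1 * (zw v (k+2) * x)) = v (k+2) * (v (k+3) * (Aw v (k+1) * x))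
    rw [hz, Arec hvcomm k (by omega)]
    simp only [mul_assoc]
    rw [swap_head h13, swap_head hA3.symm, ihx, swap_head hA3.symm,
      abc_tail hbr12 hbr23 hc13 hsq3]

include hvbraid hvcomm hvsq in
lemma N'lem : ∀ m : ℕ, m + 2 ≤ n - 1 → ∀ x : M,
    zw v (m+1) * (v 1 * (Aw' v m * x)) = Aw' v m * (v (m+2) * (v (m+1) * x)) := by
  intro m
  induction m with
  | zero => intro h x; simp [Aw'_zero, zw_one]
  | succ k ih =>
    intro h x
    have ihx := ih (by omega)
    have hz : zw v (k+2) = v (k+3) * (zw v (k+1) * v (k+3)) :=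
      Zrec hvbraid hvcomm (k+1) (by omega) (by omega)
    have h31 : v (k+3) * v 1 = v 1 * v (k+3) :=
      hvcomm (k+3) 1 (by omega) (by omega) (by omega) (by omega) (Or.inr (by omega))
    have hA3 : v (k+3) * Aw' v k = Aw' v k * v (k+3) := by
      have h1 : v (k+3) * ascV v 1 k = ascV v 1 k * v (k+3) :=
        commute_ascV v (fun j hj1 hj2 =>
          hvcomm (k+3) j (by omega) (by omega) hj1 (by omega) (Or.inr (by omega)))
      have h2 : v (k+3) * ascV v 2 (k+1) = ascV v 2 (k+1) * v (k+3) :=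
        commute_ascV v (fun j hj1 hj2 =>
          hvcomm (k+3) j (by omega) (by omega) (by omega) (by omega) (Or.inr (by omega)))
      rw [Aw', ← mul_assoc, h2, mul_assoc, h1, ← mul_assoc]
    have hbr12 : v (k+1) * v (k+2) * v (k+1) = v (k+2) * v (k+1) * v (k+2) :=
      hvbraid (k+1) (k+2) (by omega) (by omega) (by omega) (by omega) (Or.inl rfl)
    have hbr23 : v (k+2) * v (k+3) * v (k+2) = v (k+3) * v (k+2) * v (k+3) :=
      hvbraid (k+2) (k+3) (by omega) (by omega) (by omega) (by omega) (Or.inl rfl)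
    have hc13 : v (k+1) * v (k+3) = v (k+3) * v (k+1) :=
      hvcomm (k+1) (k+3) (by omega) (by omega) (by omega) (by omega) (Or.inl (by omega))
    have hsq2 : v (k+2) * v (k+2) = 1 := hvsq (k+2) (by omega) (by omega)
    show zw v (k+2) * (v 1 * (Aw' v (k+1) * x)) = Aw' v (k+1) * (v (k+3) * (v (k+2) * x))
    rw [hz, A'rec hvcomm k (by omega)]
    simp only [mul_assoc]
    rw [swap_head h31, swap_head hA3, ihx, swap_head hA3,
      abc'_tail hbr12 hbr23 hc13 hsq2]

include hvsq in
lemma AwInv (m : ℕ) (h : m + 1 ≤ n - 1) : Aw' v m * Aw v m = 1 := by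
  have h1 : ascV v 1 m * descV v 1 m = 1 :=
    ascV_mul_descV v (fun k hk hk' => hvsq k hk (by omega))
  have h2 : ascV v 2 (m+1) * descV v 2 (m+1) = 1 :=
    ascV_mul_descV v (fun k hk hk' => hvsq k (by omega) (by omega))
  rw [Aw, Aw']
  calc ascV v 2 (m+1) * ascV v 1 m * (descV v 1 m * descV v 2 (m+1))
      = ascV v 2 (m+1) * (ascV v 1 m * descV v 1 m) * descV v 2 (m+1) := by
        simp [mul_assoc]
    _ = 1 := by rw [h1, mul_one, h2]

/-- `Yw v σ i = v 1 (v 2 ⋯ v_i v_{i+1} v_i ⋯ v_2) σ (v 2 ⋯ v_i v_{i+1} v_i ⋯ v_2) v 1`. -/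
def Yw (v : ℕ → M) (σ : M) (i : ℕ) : M := v 1 * (zw v i * (σ * (zw v i * v 1)))

variable {σ : M} (hσv : ∀ i : ℕ, 3 ≤ i → i ≤ n - 1 → σ * v i = v i * σ)

include hvbraid hvcomm hvsq hσv in
lemma Yrec (m : ℕ) (h : m + 3 ≤ n - 1) :
    Yw v σ (m+2) = v (m+3) * (Yw v σ (m+1) * v (m+3)) := by
  have hz : zw v (m+2) = v (m+3) * (zw v (m+1) * v (m+3)) :=
    Zrec hvbraid hvcomm (m+1) (by omega) (by omega)
  have h13 : v 1 * v (m+3) = v (m+3) * v 1 :=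
    hvcomm 1 (m+3) (by omega) (by omega) (by omega) (by omega) (Or.inl (by omega))
  have h3σ : v (m+3) * σ = σ * v (m+3) := (hσv (m+3) (by omega) (by omega)).symm
  have hsq3 : v (m+3) * v (m+3) = 1 := hvsq (m+3) (by omega) (by omega)
  rw [Yw, Yw, hz]
  simp only [mul_assoc]
  rw [swap_head h13, swap_head h3σ, cancel_head hsq3, h13.symm]

variable (hbraid_base : 2 ≤ n - 1 →
      σ * (v 1 * v 2 * σ * v 2 * v 1) * σ =
        (v 1 * v 2 * σ * v 2 * v 1) * σ * (v 1 * v 2 * σ * v 2 * v 1))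

include hvbraid hvcomm hvsq hσv hbraid_base in
lemma Llem : ∀ m : ℕ, m + 2 ≤ n - 1 → ∀ x : M,
    σ * (Yw v σ (m+1) * (σ * x)) = Yw v σ (m+1) * (σ * (Yw v σ (m+1) * x)) := by
  intro m
  induction m with
  | zero =>
    intro h x
    have hb := congrArg (· * x) (hbraid_base (by omega))
    simp only [mul_assoc] at hb
    simpa only [Yw, Nat.zero_add, zw_one, mul_assoc] using hb
  | succ k ih =>
    intro h x
    have ihx := ih (by omega)
    have hY : Yw v σ (k+2) = v (k+3) * (Yw v σ (k+1) * v (k+3)) :=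
      Yrec hvbraid hvcomm hvsq hσv k (by omega)
    have hσ3 : σ * v (k+3) = v (k+3) * σ := hσv (k+3) (by omega) (by omega)
    have hsq3 : v (k+3) * v (k+3) = 1 := hvsq (k+3) (by omega) (by omega)
    show σ * (Yw v σ (k+2) * (σ * x)) = Yw v σ (k+2) * (σ * (Yw v σ (k+2) * x))
    rw [hY]
    simp only [mul_assoc]
    rw [swap_head hσ3.symm, swap_head hσ3, ihx, swap_head hσ3.symm, cancel_head hsq3]

end MainLemmas

end VSBpaper

namespace VSBpaper

/-- **Lemma 4.4.** For all `1 ≤ i, j ≤ n-1` with `|i-j| = 1`, the braid relation `σ_i σ_j σ_i = σ_j σ_i σ_j` holds in `M`. -/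
theorem braid_relation {M : Type*} [Monoid M] (n : ℕ) (hn : 2 ≤ n) (v : ℕ → M)
    (hvbraid : ∀ i j : ℕ, 1 ≤ i → i ≤ n - 1 → 1 ≤ j → j ≤ n - 1 → (i + 1 = j ∨ j + 1 = i) →
      v i * v j * v i = v j * v i * v j)
    (hvcomm : ∀ i j : ℕ, 1 ≤ i → i ≤ n - 1 → 1 ≤ j → j ≤ n - 1 → (i + 1 < j ∨ j + 1 < i) →
      v i * v j = v j * v i)
    (hvsq : ∀ i : ℕ, 1 ≤ i → i ≤ n - 1 → v i * v i = 1)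
    (σ σ' τ : M)
    (hcomm_στ : σ * τ = τ * σ)
    (hinv : σ * σ' = 1) (hinv' : σ' * σ = 1)
    (hτv : ∀ i : ℕ, 3 ≤ i → i ≤ n - 1 → τ * v i = v i * τ)
    (hσv : ∀ i : ℕ, 3 ≤ i → i ≤ n - 1 → σ * v i = v i * σ)
    (hbraid_base : 2 ≤ n - 1 →
      σ * (v 1 * v 2 * σ * v 2 * v 1) * σ =
        (v 1 * v 2 * σ * v 2 * v 1) * σ * (v 1 * v 2 * σ * v 2 * v 1))
    (hmixed_base : 2 ≤ n - 1 →
      τ * (v 1 * v 2 * σ * v 2 * v 1) * σ =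
        (v 1 * v 2 * σ * v 2 * v 1) * σ * (v 1 * v 2 * τ * v 2 * v 1))
    (hfar_σσ : 3 ≤ n - 1 →
      σ * (v 2 * v 3 * v 1 * v 2 * σ * v 2 * v 1 * v 3 * v 2) =
        (v 2 * v 3 * v 1 * v 2 * σ * v 2 * v 1 * v 3 * v 2) * σ)
    (hfar_τσ : 3 ≤ n - 1 →
      τ * (v 2 * v 3 * v 1 * v 2 * σ * v 2 * v 1 * v 3 * v 2) =
        (v 2 * v 3 * v 1 * v 2 * σ * v 2 * v 1 * v 3 * v 2) * τ)
    (hfar_ττ : 3 ≤ n - 1 →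
      τ * (v 2 * v 3 * v 1 * v 2 * τ * v 2 * v 1 * v 3 * v 2) =
        (v 2 * v 3 * v 1 * v 2 * τ * v 2 * v 1 * v 3 * v 2) * τ)
    (σs σs' τs : ℕ → M)
    (hσ1 : σs 1 = σ) (hσ'1 : σs' 1 = σ') (hτ1 : τs 1 = τ)
    (hσdef : ∀ i : ℕ, 1 ≤ i → i ≤ n - 2 →
      σs (i + 1) = descV v 1 i * descV v 2 (i + 1) * σ * ascV v 2 (i + 1) * ascV v 1 i)
    (hσ'def : ∀ i : ℕ, 1 ≤ i → i ≤ n - 2 →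
      σs' (i + 1) = descV v 1 i * descV v 2 (i + 1) * σ' * ascV v 2 (i + 1) * ascV v 1 i)
    (hτdef : ∀ i : ℕ, 1 ≤ i → i ≤ n - 2 →
      τs (i + 1) = descV v 1 i * descV v 2 (i + 1) * τ * ascV v 2 (i + 1) * ascV v 1 i) :
    ∀ i j : ℕ, 1 ≤ i → i ≤ n - 1 → 1 ≤ j → j ≤ n - 1 → (i + 1 = j ∨ j + 1 = i) →
      σs i * σs j * σs i = σs j * σs i * σs j := by
  -- `σs (m+1)` is `σ` conjugated by the word `Aw v m`
  have hsig : ∀ m : ℕ, m + 1 ≤ n - 1 → σs (m + 1) = Aw v m * (σ * Aw' v m) := by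
    intro m hm
    rcases m with _ | k
    · simp [hσ1, Aw_zero, Aw'_zero]
    · have hd := hσdef (k+1) (by omega) (by omega)
      rw [hd, Aw, Aw']
      simp only [mul_assoc]
  have hstar : ∀ m : ℕ, m + 2 ≤ n - 1 →
      σs (m + 2) = Aw v m * (Yw v σ (m+1) * Aw' v m) := by
    intro m hm
    have hs : σs (m + 2) = Aw v (m+1) * (σ * Aw' v (m+1)) := hsig (m+1) (by omega)
    have hN := Nlem hvbraid hvcomm hvsq m hm
    have hN'p : zw v (m+1) * (v 1 * Aw' v m) = Aw' v m * (v (m+2) * v (m+1)) := by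
      have := N'lem hvbraid hvcomm hvsq m hm 1
      simpa only [mul_one] using this
    rw [hs, Arec hvcomm m hm, A'rec hvcomm m hm, Yw]
    simp only [mul_assoc]
    rw [hN'p, hN]
  have hmain : ∀ m : ℕ, m + 2 ≤ n - 1 →
      σs (m+1) * σs (m+2) * σs (m+1) = σs (m+2) * σs (m+1) * σs (m+2) := by
    intro m hm
    have hs := hsig m (by omega)
    have hst := hstar m hm
    have hA'A : Aw' v m * Aw v m = 1 := AwInv hvsq m (by omega)
    have hcan : ∀ x : M, Aw' v m * (Aw v m * x) = x := fun x => by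
      rw [← mul_assoc, hA'A, one_mul]
    rw [hs, hst]
    simp only [mul_assoc]
    simp only [hcan]
    rw [Llem hvbraid hvcomm hvsq hσv hbraid_base m hm (Aw' v m)]
  intro i j hi1 hi2 hj1 hj2 hij
  rcases hij with h | h
  · obtain ⟨m, rfl⟩ : ∃ m, i = m + 1 := ⟨i - 1, by omega⟩
    subst h
    exact hmain m (by omega)
  · obtain ⟨m, rfl⟩ : ∃ m, j = m + 1 := ⟨j - 1, by omega⟩
    subst h
    exact (hmain m (by omega)).symm

end VSBpaper
end
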